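/- Let C ⊆ {0,1}^n be a distance preserving concept class and c ∈ C. Then deg_C(c), the set of coordinates x such that c is incident to an x-edge in the one-inclusion graph of C, is a teaching set for c: for every c' ∈ C with c' ≠ c there exists x ∈ deg_C(c) with c(x) ≠ c'(x). -/

import Mathlib

variable {n : ℕ}

/-- `S` is shattered by the concept class `C`. -/
def Shatters (C : Set (Fin n → Bool)) (S : Finset (Fin n)) : Prop :=
  ∀ f : Fin n → Bool, ∃ c ∈ C, ∀ x ∈ S, c x = f x

/-- `B` is a cube of `C` with dimension set `S`. -/
def IsCube (C B : Set (Fin n → Bool)) (S : Finset (Fin n)) : Prop :=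
  B ⊆ C ∧ (∀ b ∈ B, ∀ b' ∈ B, ∀ x, x ∉ S → b x = b' x) ∧
    (∀ f : Fin n → Bool, ∃ b ∈ B, ∀ x ∈ S, b x = f x)

/-- `S` is strongly shattered by `C`. -/
def StronglyShatters (C : Set (Fin n → Bool)) (S : Finset (Fin n)) : Prop :=
  ∃ B, IsCube C B S

/-- `C` is extremal: every shattered set is strongly shattered. -/
def Extremal (C : Set (Fin n → Bool)) : Prop :=
  ∀ S, Shatters C S → StronglyShatters C S

/-- The one-inclusion graph of `C`: vertices are the concepts of `C`, edges
connect concepts at Hamming distance 1. -/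
def oneInclusionGraph (C : Set (Fin n → Bool)) : SimpleGraph C where
  Adj u v := hammingDist u.1 v.1 = 1
  symm := ⟨by intro u v h; rwa [hammingDist_comm]⟩
  loopless := ⟨by intro u h; simp [hammingDist_self] at h⟩

/-- For a distance preserving class `C`, the set of coordinates `x` such that
`c` is incident to an `x`-edge is a teaching set for `c` with respect to `C`. -/
theorem deg_is_teaching_set (n : ℕ) (C : Set (Fin n → Bool))
    (hDP : ∀ u v : C, (oneInclusionGraph C).dist u v = hammingDist u.1 v.1) :
    ∀ c ∈ C, ∀ c' ∈ C, c' ≠ c →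
      ∃ x : Fin n, Function.update c x (!(c x)) ∈ C ∧ c x ≠ c' x := by
  intro c hc c' hc' hne
  set G := oneInclusionGraph C
  set cv : C := ⟨c, hc⟩
  set cv' : C := ⟨c', hc'⟩
  have hd : G.dist cv cv' = hammingDist c c' := hDP cv cv'
  have hdne : G.dist cv cv' ≠ 0 := by
    rw [hd, hammingDist_ne_zero]
    exact fun h => hne h.symm
  obtain ⟨p, hp⟩ := SimpleGraph.exists_walk_of_dist_ne_zero hdne
  have hnev : cv ≠ cv' := by
    intro h
    exact hne (congrArg Subtype.val h).symm
  obtain ⟨u, h, q, rfl⟩ := SimpleGraph.Walk.exists_eq_cons_of_ne hnev p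
  · -- h : G.Adj cv u, q : Walk u cv'
    have hadj : hammingDist c u.1 = 1 := h
    -- unique differing coordinate
    have hcard : (Finset.filter (fun i => c i ≠ u.1 i) Finset.univ).card = 1 := hadj
    obtain ⟨x, hx⟩ := Finset.card_eq_one.mp hcard
    have hxmem : c x ≠ u.1 x := by
      have : x ∈ Finset.filter (fun i => c i ≠ u.1 i) Finset.univ := hx ▸ Finset.mem_singleton_self x
      simpa using this
    have hagree : ∀ y, y ≠ x → c y = u.1 y := by
      intro y hy
      by_contra hcy
      have : y ∈ Finset.filter (fun i => c i ≠ u.1 i) Finset.univ := by simpa using hcy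
      rw [hx, Finset.mem_singleton] at this
      exact hy this
    have hu : u.1 = Function.update c x (!(c x)) := by
      funext y
      rcases eq_or_ne y x with rfl | hy
      · rw [Function.update_self]
        cases hcx : c y <;> cases hux : u.1 y <;> simp_all
      · rw [Function.update_of_ne hy]
        exact (hagree y hy).symm
    refine ⟨x, hu ▸ u.2, ?_⟩
    -- show c x ≠ c' x
    intro hcc
    -- hammingDist u c' = d + 1
    have hq : q.length = hammingDist c c' - 1 := by
      have := hp
      simp [SimpleGraph.Walk.length_cons, hd] at this
      omega
    have hdle : G.dist u cv' ≤ hammingDist c c' - 1 := hq ▸ SimpleGraph.dist_le q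
    have hdu : G.dist u cv' = hammingDist u.1 c' := hDP u cv'
    have hbig : hammingDist u.1 c' = hammingDist c c' + 1 := by
      have hset : Finset.filter (fun i => u.1 i ≠ c' i) Finset.univ
          = insert x (Finset.filter (fun i => c i ≠ c' i) Finset.univ) := by
        ext y
        rcases eq_or_ne y x with rfl | hy
        · simp only [Finset.mem_filter, Finset.mem_univ, true_and, Finset.mem_insert]
          constructor
          · intro _; simp
          · intro _
            rw [hu, Function.update_self, ← hcc]
            cases c y <;> simp
        · simp only [Finset.mem_filter, Finset.mem_univ, true_and, Finset.mem_insert]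
          rw [hu, Function.update_of_ne hy]
          tauto
      have hxnot : x ∉ Finset.filter (fun i => c i ≠ c' i) Finset.univ := by simp [hcc]
      calc hammingDist u.1 c' = (insert x (Finset.filter (fun i => c i ≠ c' i) Finset.univ)).card := by
            rw [hammingDist]; exact congrArg Finset.card hset
        _ = hammingDist c c' + 1 := by rw [Finset.card_insert_of_notMem hxnot]; rfl
    have hdpos : 1 ≤ hammingDist c c' := by
      rw [← hd]; omega
    omega
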